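/- arXiv:2408.11499 — 2 statements merged into one kernel-verified Lean document; each statement's English description precedes it below -/
import Mathlib

section
/- Let N ≥ 1, a > 0, and for k = 1,…,N let h_k ∈ ℂ, f_k ∈ ℝ, φ_k ∈ ℝ, and define r(t) = a Σ_{k=1}^N h_k exp(i(2π f_k t + φ_k)). Let T_s > 0 be a sampling period and n_s a positive integer, and suppose that for every pair k < l: (f_k − f_l)·T_s·n_s is an integer and (f_k − f_l)·T_s is not an integer. Then the average of the sampled instantaneous powers equals the sum of individual powers: (1/n_s) Σ_{d=1}^{n_s} |r(T_s·d)|² = Σ_{k=1}^N a²|h_k|². -/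
open scoped Real

lemma geom_icc_zero (z : ℂ) (n : ℕ) (h1 : z ^ n = 1) (h2 : z ≠ 1) :
    ∑ d ∈ Finset.Icc 1 n, z ^ d = 0 := by
  have hr : ∑ d ∈ Finset.range (n + 1), z ^ d = 1 := by
    rw [geom_sum_eq h2, pow_succ, h1, one_mul]
    exact div_self (sub_ne_zero.mpr h2)
  have hsplit : ∑ d ∈ Finset.range (n + 1), z ^ d
      = (∑ d ∈ Finset.Icc 1 n, z ^ d) + 1 := by
    rw [Finset.sum_range_succ' (fun d => z ^ d) n]
    congr 1
    have : Finset.Icc 1 n = Finset.Ico 1 (n + 1) := by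
      rw [Finset.Ico_add_one_right_eq_Icc]
    rw [this, Finset.sum_Ico_eq_sum_range]
    simp [add_comm]
  rw [hsplit] at hr
  linear_combination hr

/-- **Power linearity of averaged RSSI samples (Equations 5–6).**
If the sampling span `Tₛ·nₛ` covers an integer number of beating cycles for every pair of
senders while the per-sample phase increment `(fₖ − f_l)·Tₛ` is never an integer, then the
average of the sampled instantaneous powers equals the sum of individual powers. -/
theorem stmt_7 (N : ℕ) (hN : 1 ≤ N) (a : ℝ) (ha : 0 < a)
    (h : Fin N → ℂ) (f φ : Fin N → ℝ)
    (Ts : ℝ) (hTs : 0 < Ts) (ns : ℕ) (hns : 0 < ns)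
    (hbeat : ∀ k l : Fin N, k < l →
      (∃ m : ℤ, (f k - f l) * Ts * ns = m) ∧ ¬ ∃ m : ℤ, (f k - f l) * Ts = m) :
    (1 / ns : ℝ) * ∑ d ∈ Finset.Icc 1 ns,
        ‖(a : ℂ) *
          ∑ k, h k * Complex.exp (Complex.I * ((2 * π * f k * (Ts * d) + φ k : ℝ) : ℂ))‖ ^ 2 =
      ∑ k, a ^ 2 * ‖h k‖ ^ 2 := by
  have hnsne : (ns : ℝ) ≠ 0 := Nat.cast_ne_zero.mpr hns.ne'
  -- symmetrized beating hypothesis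
  have hsym : ∀ k l : Fin N, k ≠ l →
      (∃ m : ℤ, (f k - f l) * Ts * ns = m) ∧ ¬ ∃ m : ℤ, (f k - f l) * Ts = m := by
    intro k l hkl
    rcases lt_or_gt_of_ne hkl with h' | h'
    · exact hbeat k l h'
    · obtain ⟨⟨m, hm⟩, hnot⟩ := hbeat l k h'
      refine ⟨⟨-m, ?_⟩, ?_⟩
      · push_cast; linarith
      · rintro ⟨m', hm2⟩
        exact hnot ⟨-m', by push_cast; linarith⟩
  set E : Fin N → ℕ → ℂ := fun k d =>
    Complex.exp (Complex.I * ((2 * π * f k * (Ts * d) + φ k : ℝ) : ℂ)) with hE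
  -- diagonal : E k d * conj (E k d) = 1
  have diag : ∀ (k : Fin N) (d : ℕ), E k d * (starRingEnd ℂ) (E k d) = 1 := by
    intro k d
    rw [hE]
    simp only
    rw [Complex.mul_conj]
    norm_cast
    rw [← Complex.sq_norm, Complex.norm_exp]
    simp
  -- cross terms vanish
  have cross : ∀ k l : Fin N, k ≠ l →
      ∑ d ∈ Finset.Icc 1 ns, E k d * (starRingEnd ℂ) (E l d) = 0 := by
    intro k l hkl
    obtain ⟨⟨m, hm⟩, hnot⟩ := hsym k l hkl
    set w : ℂ := Complex.I * ((2 * π * ((f k - f l) * Ts) : ℝ) : ℂ) with hw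
    have hterm : ∀ d : ℕ, E k d * (starRingEnd ℂ) (E l d) =
        Complex.exp (Complex.I * ((φ k - φ l : ℝ) : ℂ)) * Complex.exp w ^ d := by
      intro d
      rw [hE]
      simp only
      rw [← Complex.exp_conj, ← Complex.exp_nat_mul, ← Complex.exp_add, ← Complex.exp_add]
      congr 1
      rw [hw]
      simp only [map_mul, Complex.conj_I, Complex.conj_ofReal]
      push_cast
      ring
    have hzpow : Complex.exp w ^ ns = 1 := by
      rw [← Complex.exp_nat_mul]
      have : (ns : ℂ) * w = (m : ℂ) * (2 * π * Complex.I) := by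
        rw [hw]
        have hm' : (((f k - f l) * Ts * ns : ℝ) : ℂ) = (m : ℂ) := by exact_mod_cast hm
        push_cast at hm' ⊢
        linear_combination Complex.I * 2 * π * hm' -- fix if needed
      rw [this, Complex.exp_int_mul_two_pi_mul_I]
    have hzne : Complex.exp w ≠ 1 := by
      intro hz
      rw [Complex.exp_eq_one_iff] at hz
      obtain ⟨n, hn⟩ := hz
      apply hnot
      refine ⟨n, ?_⟩
      rw [hw] at hn
      have hn' : Complex.I * ((2 * π * ((f k - f l) * Ts) : ℝ) : ℂ)
          = Complex.I * ((n : ℂ) * (2 * π)) := by rw [hn]; ring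
      have hc := mul_left_cancel₀ Complex.I_ne_zero hn'
      have h2 : (2 * π * ((f k - f l) * Ts) : ℝ) = (n : ℝ) * (2 * π) := by
        exact_mod_cast hc
      have h3 : (2 * π : ℝ) * ((f k - f l) * Ts) = (2 * π) * n := by linarith
      exact mul_left_cancel₀ (by positivity : (2 * π : ℝ) ≠ 0) h3
    calc ∑ d ∈ Finset.Icc 1 ns, E k d * (starRingEnd ℂ) (E l d)
        = ∑ d ∈ Finset.Icc 1 ns,
            Complex.exp (Complex.I * ((φ k - φ l : ℝ) : ℂ)) * Complex.exp w ^ d := by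
          exact Finset.sum_congr rfl fun d _ => hterm d
      _ = Complex.exp (Complex.I * ((φ k - φ l : ℝ) : ℂ)) *
            ∑ d ∈ Finset.Icc 1 ns, Complex.exp w ^ d := by rw [Finset.mul_sum]
      _ = 0 := by rw [geom_icc_zero _ _ hzpow hzne, mul_zero]
  -- key complex identity
  have key : ∑ d ∈ Finset.Icc 1 ns,
      (∑ k, h k * E k d) * (starRingEnd ℂ) (∑ k, h k * E k d)
      = (ns : ℂ) * ∑ k, (Complex.normSq (h k) : ℂ) := by
    have expand : ∀ d : ℕ,
        (∑ k, h k * E k d) * (starRingEnd ℂ) (∑ k, h k * E k d)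
        = ∑ k, ∑ l, (h k * (starRingEnd ℂ) (h l)) * (E k d * (starRingEnd ℂ) (E l d)) := by
      intro d
      rw [map_sum, Finset.sum_mul_sum]
      refine Finset.sum_congr rfl fun k _ => Finset.sum_congr rfl fun l _ => ?_
      rw [map_mul]; ring
    calc ∑ d ∈ Finset.Icc 1 ns, (∑ k, h k * E k d) * (starRingEnd ℂ) (∑ k, h k * E k d)
        = ∑ d ∈ Finset.Icc 1 ns, ∑ k : Fin N, ∑ l : Fin N,
            (h k * (starRingEnd ℂ) (h l)) * (E k d * (starRingEnd ℂ) (E l d)) :=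
          Finset.sum_congr rfl fun d _ => expand d
      _ = ∑ k : Fin N, ∑ l : Fin N, (h k * (starRingEnd ℂ) (h l)) *
            ∑ d ∈ Finset.Icc 1 ns, E k d * (starRingEnd ℂ) (E l d) := by
          rw [Finset.sum_comm]
          refine Finset.sum_congr rfl fun k _ => ?_
          rw [Finset.sum_comm]
          refine Finset.sum_congr rfl fun l _ => ?_
          rw [Finset.mul_sum]
      _ = ∑ k : Fin N, (h k * (starRingEnd ℂ) (h k)) * (ns : ℂ) := by
          refine Finset.sum_congr rfl fun k _ => ?_
          rw [Finset.sum_eq_single k]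
          · congr 1
            calc ∑ d ∈ Finset.Icc 1 ns, E k d * (starRingEnd ℂ) (E k d)
                = ∑ d ∈ Finset.Icc 1 ns, (1 : ℂ) :=
                  Finset.sum_congr rfl fun d _ => diag k d
              _ = (ns : ℂ) := by simp
          · intro l _ hlk
            rw [cross k l (Ne.symm hlk), mul_zero]
          · intro hk; exact absurd (Finset.mem_univ k) hk
      _ = (ns : ℂ) * ∑ k, (Complex.normSq (h k) : ℂ) := by
          rw [Finset.mul_sum]
          refine Finset.sum_congr rfl fun k _ => ?_
          rw [Complex.mul_conj]; ring
  -- convert to the real statement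
  have keyR : ∑ d ∈ Finset.Icc 1 ns,
      ‖(a : ℂ) * ∑ k, h k * E k d‖ ^ 2
      = (ns : ℝ) * ∑ k, a ^ 2 * ‖h k‖ ^ 2 := by
    have habs : ∀ d : ℕ, ‖(a : ℂ) * ∑ k, h k * E k d‖ ^ 2
        = a ^ 2 * Complex.normSq (∑ k, h k * E k d) := by
      intro d
      rw [norm_mul, mul_pow, Complex.norm_real, Real.norm_eq_abs, sq_abs, Complex.sq_norm]
    have hsum : ∑ d ∈ Finset.Icc 1 ns, Complex.normSq (∑ k, h k * E k d)
        = (ns : ℝ) * ∑ k, Complex.normSq (h k) := by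
      have := key
      have h2 : ((∑ d ∈ Finset.Icc 1 ns, Complex.normSq (∑ k, h k * E k d) : ℝ) : ℂ)
          = (((ns : ℝ) * ∑ k, Complex.normSq (h k) : ℝ) : ℂ) := by
        push_cast
        rw [← this]
        refine Finset.sum_congr rfl fun d _ => ?_
        rw [Complex.mul_conj]
      exact_mod_cast h2
    calc ∑ d ∈ Finset.Icc 1 ns, ‖(a : ℂ) * ∑ k, h k * E k d‖ ^ 2
        = ∑ d ∈ Finset.Icc 1 ns, a ^ 2 * Complex.normSq (∑ k, h k * E k d) :=
          Finset.sum_congr rfl fun d _ => habs d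
      _ = a ^ 2 * ((ns : ℝ) * ∑ k, Complex.normSq (h k)) := by
          rw [← Finset.mul_sum, hsum]
      _ = (ns : ℝ) * ∑ k, a ^ 2 * ‖h k‖ ^ 2 := by
          simp only [Complex.sq_norm, Finset.mul_sum]
          exact Finset.sum_congr rfl fun k _ => by ring
  rw [keyR]
  field_simp
end

section
/- Let a > 0, T > 0, h₁, h₂ ∈ ℂ, f₁, f₂, φ₁, φ₂ ∈ ℝ, and define r(t) = h₁·a·exp(i(π/(2T))t)·exp(i(2π f₁ t + φ₁)) + h₂·a·exp(−i(π/(2T))t)·exp(i(2π f₂ t + φ₂)). Then for every t ∈ ℝ, |r(t)|² = a²(|h₁|² + |h₂|²) + 2a²|h₁||h₂| cos(2π(f₁ − f₂ + 1/(2T))·t + (arg h₁ − arg h₂) + (φ₁ − φ₂)). -/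
open scoped Real


lemma beat_aux (r₁ r₂ θ₁ θ₂ : ℝ) :
    ‖(r₁ : ℂ) * Complex.exp ((θ₁ : ℂ) * Complex.I)
      + (r₂ : ℂ) * Complex.exp ((θ₂ : ℂ) * Complex.I)‖ ^ 2
    = r₁ ^ 2 + r₂ ^ 2 + 2 * r₁ * r₂ * Real.cos (θ₁ - θ₂) := by
  rw [Complex.sq_norm, Complex.normSq_apply]
  simp [Complex.exp_ofReal_mul_I_re, Complex.exp_ofReal_mul_I_im, Real.cos_sub]
  have c1 := Real.sin_sq_add_cos_sq θ₁
  have c2 := Real.sin_sq_add_cos_sq θ₂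
  nlinarith [c1, c2]

lemma summand_eq (a : ℝ) (h : ℂ) (x y : ℝ) :
    h * (a : ℂ) * Complex.exp (Complex.I * ((x : ℝ) : ℂ)) *
        Complex.exp (Complex.I * ((y : ℝ) : ℂ)) =
      ((a * ‖h‖ : ℝ) : ℂ) *
        Complex.exp (((h.arg + x + y : ℝ) : ℂ) * Complex.I) := by
  conv_lhs => rw [← Complex.norm_mul_exp_arg_mul_I h]
  have e : ((h.arg + x + y : ℝ) : ℂ) * Complex.I
      = (h.arg : ℂ) * Complex.I + Complex.I * (x : ℂ) + Complex.I * (y : ℂ) := by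
    push_cast; ring
  rw [e, Complex.exp_add, Complex.exp_add]
  push_cast; ring

/-- **Ultra-fast beating when sending different packets.** Two synchronized GFSK senders
transmitting all ones and all zeros respectively (modulator signals `a·exp(±i(π/(2T))t)`)
produce a beating term at the shifted frequency `f₁ − f₂ + 1/(2T)`. -/
theorem stmt_8 (a : ℝ) (ha : 0 < a) (T : ℝ) (hT : 0 < T)
    (h₁ h₂ : ℂ) (f₁ f₂ φ₁ φ₂ : ℝ) (t : ℝ) :
    ‖
        (h₁ * (a : ℂ) * Complex.exp (Complex.I * ((π / (2 * T) * t : ℝ) : ℂ)) *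
            Complex.exp (Complex.I * ((2 * π * f₁ * t + φ₁ : ℝ) : ℂ)) +
          h₂ * (a : ℂ) * Complex.exp (-(Complex.I * ((π / (2 * T) * t : ℝ) : ℂ))) *
            Complex.exp (Complex.I * ((2 * π * f₂ * t + φ₂ : ℝ) : ℂ)))‖ ^ 2 =
      a ^ 2 * (‖h₁‖ ^ 2 + ‖h₂‖ ^ 2) +
        2 * a ^ 2 * ‖h₁‖ * ‖h₂‖ *
          Real.cos (2 * π * (f₁ - f₂ + 1 / (2 * T)) * t + (h₁.arg - h₂.arg) + (φ₁ - φ₂)) := by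
  have hneg : -(Complex.I * ((π / (2 * T) * t : ℝ) : ℂ))
      = Complex.I * ((-(π / (2 * T) * t) : ℝ) : ℂ) := by push_cast; ring
  rw [hneg, summand_eq, summand_eq, beat_aux]
  have hcos : h₁.arg + π / (2 * T) * t + (2 * π * f₁ * t + φ₁) -
        (h₂.arg + -(π / (2 * T) * t) + (2 * π * f₂ * t + φ₂))
      = 2 * π * (f₁ - f₂ + 1 / (2 * T)) * t + (h₁.arg - h₂.arg) + (φ₁ - φ₂) := by
    field_simp
    ring
  rw [hcos]
  ring
end
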